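/- arXiv:1111.6616 — 8 statements merged into one kernel-verified Lean document; each statement's English description precedes it below -/
import Mathlib

section
/- Let Γ be a relational structure over a finite relational signature such that for every n ≥ 1 there exists an n-ary totally symmetric polymorphism of Γ. Then for every finite induced substructure S of Γ there is a homomorphism from the set structure P(S) to Γ. -/
/-- A relational signature: a set of relation symbols, each with an arity. -/
structure Signature where
  symbols : Type
  arity : symbols → ℕ

/-- A relational structure over the signature `σ`. -/
structure RelStruct (σ : Signature) where
  D : Type
  rel : ∀ s : σ.symbols, Set (Fin (σ.arity s) → D)

/-- `f` is a homomorphism from `A` to `B`. -/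
def IsHom {σ : Signature} (A B : RelStruct σ) (f : A.D → B.D) : Prop :=
  ∀ (s : σ.symbols) (t : Fin (σ.arity s) → A.D), t ∈ A.rel s → (fun i => f (t i)) ∈ B.rel s

/-- The bijection `e` is an automorphism of `Γ`. -/
def IsAuto {σ : Signature} (Γ : RelStruct σ) (e : Γ.D ≃ Γ.D) : Prop :=
  ∀ (s : σ.symbols) (t : Fin (σ.arity s) → Γ.D), t ∈ Γ.rel s ↔ (fun i => e (t i)) ∈ Γ.rel s

/-- An `n`-ary operation is totally symmetric if its value only depends on the set of
arguments. -/
def TotallySymmetric {D : Type} {n : ℕ} (f : (Fin n → D) → D) : Prop :=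
  ∀ x y : Fin n → D, Set.range x = Set.range y → f x = f y

/-- The `n`-ary operation `f` preserves the `m`-ary relation `R`. -/
def Preserves {D : Type} {n m : ℕ} (f : (Fin n → D) → D) (R : Set (Fin m → D)) : Prop :=
  ∀ t : Fin n → Fin m → D, (∀ i, t i ∈ R) → (fun j => f (fun i => t i j)) ∈ R

/-- A polymorphism of `Γ` is an operation preserving all relations of `Γ`. -/
def IsPolymorphism {σ : Signature} (Γ : RelStruct σ) {n : ℕ} (f : (Fin n → Γ.D) → Γ.D) : Prop :=
  ∀ s : σ.symbols, Preserves f (Γ.rel s)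

/-- The substructure of `Γ` induced on the subset `S` of its domain. -/
def induced {σ : Signature} (Γ : RelStruct σ) (S : Set Γ.D) : RelStruct σ where
  D := ↥S
  rel := fun s => {t | (fun i => (t i : Γ.D)) ∈ Γ.rel s}

/-- The set structure `P(B)`: the domain consists of all non-empty subsets of the domain
of `B`, and a tuple `(U_1, …, U_k)` is in `R^{P(B)}` iff for every `i` and every
`u ∈ U_i` there is a tuple `t ∈ R^B` with `t i = u` and `t j ∈ U_j` for all `j`. -/
def setStruct {σ : Signature} (B : RelStruct σ) : RelStruct σ where
  D := {U : Set B.D // U.Nonempty}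
  rel := fun s =>
    {U | ∀ (i : Fin (σ.arity s)) (u : B.D), u ∈ (U i).1 →
      ∃ t ∈ B.rel s, t i = u ∧ ∀ j, t j ∈ (U j).1}


private lemma exists_surj_fin {P : Type} [Finite P] [Nonempty P] {n : ℕ} (hn : Nat.card P ≤ n) :
    ∃ g : Fin n → P, Function.Surjective g := by
  have hk : 0 < Nat.card P := Nat.card_pos
  let e := Finite.equivFin P
  refine ⟨fun i => if h : i.1 < Nat.card P then e.symm ⟨i.1, h⟩ else Classical.arbitrary P,
    fun p => ?_⟩
  refine ⟨⟨(e p).1, lt_of_lt_of_le (e p).2 hn⟩, ?_⟩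
  have h : ((⟨(e p).1, lt_of_lt_of_le (e p).2 hn⟩ : Fin n) : ℕ) < Nat.card P := (e p).2
  beta_reduce
  rw [dif_pos h]
  have : (⟨((⟨(e p).1, lt_of_lt_of_le (e p).2 hn⟩ : Fin n) : ℕ), h⟩ : Fin (Nat.card P)) = e p :=
    Fin.ext rfl
  rw [this, Equiv.symm_apply_apply]

/-- If `Γ` is a structure over a finite relational signature (all arities positive) that
has totally symmetric polymorphisms of all arities `n ≥ 1`, then for every finite induced
substructure `S` of `Γ` there is a homomorphism from the set structure `P(S)` to `Γ`. -/
theorem stmt1 {σ : Signature} [Finite σ.symbols] (har : ∀ s : σ.symbols, 0 < σ.arity s)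
    (Γ : RelStruct σ)
    (hpoly : ∀ n : ℕ, 1 ≤ n → ∃ f : (Fin n → Γ.D) → Γ.D,
      IsPolymorphism Γ f ∧ TotallySymmetric f)
    (S : Set Γ.D) (hS : S.Finite) :
    ∃ h : (setStruct (induced Γ S)).D → Γ.D, IsHom (setStruct (induced Γ S)) Γ h := by
  classical
  haveI := hS.to_subtype
  haveI : Finite (induced Γ S).D := hS.to_subtype
  obtain ⟨M, hM⟩ := Finite.exists_le σ.arity
  set c := Nat.card ↥S with hc
  have hcn : c + 1 ≤ (M + 1) * (c + 1) := Nat.le_mul_of_pos_left _ (Nat.succ_pos M)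
  set n := (M + 1) * (c + 1) with hndef
  obtain ⟨f, hfpoly, hfsym⟩ := hpoly n (by omega)
  have key : ∀ U : (setStruct (induced Γ S)).D, ∃ g : Fin n → ↥S, Set.range g = U.1 := by
    intro U
    haveI : Nonempty ↥U.1 := U.2.to_subtype
    have hcard : Nat.card ↥U.1 ≤ c := Nat.card_le_card_of_injective _ Subtype.val_injective
    obtain ⟨g, hg⟩ := exists_surj_fin (P := ↥U.1) (n := n) (by omega)
    refine ⟨fun k => (g k).1, ?_⟩
    rw [show (fun k : Fin n => (g k).1) = Subtype.val ∘ g from rfl]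
    ext x
    constructor
    · rintro ⟨k, rfl⟩
      exact (g k).2
    · intro hx
      obtain ⟨k, hk⟩ := hg ⟨x, hx⟩
      exact ⟨k, by show (g k).1 = x; rw [hk]⟩
  choose g hg using key
  refine ⟨fun U => f (fun k => ((g U k : ↥S) : Γ.D)), ?_⟩
  intro s t ht
  have hm : 0 < σ.arity s := har s
  choose w hw1 hw2 hw3 using ht
  haveI : ∀ j : Fin (σ.arity s), Finite ↥(t j).1 := fun j => Subtype.finite
  haveI : ∀ j : Fin (σ.arity s), Nonempty ↥(t j).1 := fun j => (t j).2.to_subtype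
  haveI : Nonempty ((j : Fin (σ.arity s)) × ↥(t j).1) :=
    ⟨⟨⟨0, hm⟩, Classical.arbitrary _⟩⟩
  have hcardP : Nat.card ((j : Fin (σ.arity s)) × ↥(t j).1) ≤ n := by
    haveI : ∀ j : Fin (σ.arity s), Fintype ↥(t j).1 := fun j => Fintype.ofFinite _
    haveI : Fintype ↥S := Fintype.ofFinite _
    rw [Nat.card_eq_fintype_card, Fintype.card_sigma]
    have h1 : ∀ j : Fin (σ.arity s), Fintype.card ↥(t j).1 ≤ c := by
      intro j
      rw [hc, Nat.card_eq_fintype_card]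
      exact Fintype.card_le_of_injective _ Subtype.val_injective
    calc ∑ j, Fintype.card ↥(t j).1 ≤ ∑ _j : Fin (σ.arity s), c :=
          Finset.sum_le_sum (fun j _ => h1 j)
      _ = σ.arity s * c := by simp [mul_comm]
      _ ≤ M * c := Nat.mul_le_mul_right _ (hM s)
      _ ≤ n := by rw [hndef]; exact Nat.mul_le_mul (by omega) (by omega)
  obtain ⟨G, hG⟩ := exists_surj_fin hcardP
  set T : Fin n → Fin (σ.arity s) → ↥S := fun k => w (G k).1 (G k).2.1 (G k).2.2 with hT
  have hTrel : ∀ k, T k ∈ (induced Γ S).rel s := fun k => hw1 _ _ _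
  have hTrange : ∀ j, Set.range (fun k => T k j) = (t j).1 := by
    intro j
    ext a
    constructor
    · rintro ⟨k, rfl⟩
      exact hw3 _ _ _ j
    · intro ha
      obtain ⟨k, hk⟩ := hG ⟨j, ⟨a, ha⟩⟩
      refine ⟨k, ?_⟩
      simp only [hT]
      rw [hk]
      exact hw2 j a ha
  have hmem := hfpoly s (fun k j => ((T k j : ↥S) : Γ.D)) (fun k => hTrel k)
  show (fun j => f (fun k => ((g (t j) k : ↥S) : Γ.D))) ∈ Γ.rel s
  have heq : (fun j => f (fun k => ((g (t j) k : ↥S) : Γ.D)))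
      = (fun j => f (fun k => ((T k j : ↥S) : Γ.D))) := by
    funext j
    apply hfsym
    have h1 : Set.range (fun k : Fin n => ((g (t j) k : ↥S) : Γ.D))
        = Subtype.val '' (t j).1 := by
      rw [show (fun k : Fin n => ((g (t j) k : ↥S) : Γ.D)) = Subtype.val ∘ (g (t j)) from rfl,
        Set.range_comp, hg (t j)]
    have h2 : Set.range (fun k : Fin n => ((T k j : ↥S) : Γ.D))
        = Subtype.val '' (t j).1 := by
      rw [show (fun k : Fin n => ((T k j : ↥S) : Γ.D)) = Subtype.val ∘ (fun k => T k j) from rfl,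
        Set.range_comp, hTrange j]
    rw [h1, h2]
  rw [heq]
  exact hmem
end

section
/- Let Δ and Γ be relational structures over the same signature such that there exist homomorphisms f : Δ → Γ and g : Γ → Δ. Assume that Γ is a core (every endomorphism of Γ is an embedding) and that for every n, every orbit of the componentwise action of Aut(Γ) on n-tuples is primitive positive definable in Γ. Then for every n, the number of orbits of n-subsets of Γ is at most the number of orbits of n-subsets of Δ. -/
/-- An atomic formula over signature `σ` with variables from `V`: either a relational
atom `R(v_1, …, v_k)` or an equality atom `v = w`. -/
inductive Atom (σ : Signature) (V : Type) where
  | rel (s : σ.symbols) (vars : Fin (σ.arity s) → V) : Atom σ V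
  | eq (x y : V) : Atom σ V

/-- Satisfaction of an atomic formula in `Γ` under the valuation `v`. -/
def atomHolds {σ : Signature} (Γ : RelStruct σ) {V : Type} (v : V → Γ.D) :
    Atom σ V → Prop
  | .rel s vars => (fun i => v (vars i)) ∈ Γ.rel s
  | .eq x y => v x = v y

/-- A primitive positive formula with free variables `Fin n`: an existentially
quantified (over `Fin numEx` fresh variables) finite conjunction of atomic formulas. -/
structure PPFormula (σ : Signature) (n : ℕ) where
  numEx : ℕ
  atoms : List (Atom σ (Fin n ⊕ Fin numEx))

/-- Satisfaction of a primitive positive formula by a tuple `t` in `Γ`. -/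
def ppSat {σ : Signature} (Γ : RelStruct σ) {n : ℕ} (φ : PPFormula σ n)
    (t : Fin n → Γ.D) : Prop :=
  ∃ w : Fin φ.numEx → Γ.D, ∀ a ∈ φ.atoms, atomHolds Γ (Sum.elim t w) a

/-- The `n`-ary relation `R` is primitive positive definable in `Γ`. -/
def PPDefinable {σ : Signature} (Γ : RelStruct σ) {n : ℕ} (R : Set (Fin n → Γ.D)) : Prop :=
  ∃ φ : PPFormula σ n, ∀ t, t ∈ R ↔ ppSat Γ φ t

/-- The set of orbits of the action of `Aut(Γ)` on `n`-element subsets of the domain: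
each orbit is the collection of all images of a fixed `n`-element set under
automorphisms. -/
def subsetOrbits {σ : Signature} (Γ : RelStruct σ) (n : ℕ) : Set (Set (Set Γ.D)) :=
  {O | ∃ S : Set Γ.D, S.Finite ∧ S.ncard = n ∧
    O = {T | ∃ e : Γ.D ≃ Γ.D, IsAuto Γ e ∧ e '' S = T}}

/-- `e` is an embedding of `Γ` into itself: an isomorphism onto an induced
substructure. -/
def IsSelfEmbedding {σ : Signature} (Γ : RelStruct σ) (e : Γ.D → Γ.D) : Prop :=
  Function.Injective e ∧
    ∀ (s : σ.symbols) (t : Fin (σ.arity s) → Γ.D), t ∈ Γ.rel s ↔ (fun i => e (t i)) ∈ Γ.rel s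

/-- `Γ` is a core: every endomorphism of `Γ` is an embedding. -/
def IsCore {σ : Signature} (Γ : RelStruct σ) : Prop :=
  ∀ e : Γ.D → Γ.D, IsHom Γ Γ e → IsSelfEmbedding Γ e


section Aux

variable {σ : Signature}

lemma autoTrans {Γ : RelStruct σ} {e e' : Γ.D ≃ Γ.D} (h : IsAuto Γ e) (h' : IsAuto Γ e') :
    IsAuto Γ (e.trans e') := fun s t => (h s t).trans (h' s _)

lemma autoSymm {Γ : RelStruct σ} {e : Γ.D ≃ Γ.D} (h : IsAuto Γ e) : IsAuto Γ e.symm := by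
  intro s t
  have h2 := h s (fun i => e.symm (t i))
  simpa using h2.symm

lemma homPP {Γ : RelStruct σ} {h : Γ.D → Γ.D} (hh : IsHom Γ Γ h) {n : ℕ} (φ : PPFormula σ n)
    {t : Fin n → Γ.D} (hs : ppSat Γ φ t) : ppSat Γ φ (fun i => h (t i)) := by
  obtain ⟨w, hw⟩ := hs
  refine ⟨fun i => h (w i), fun a ha => ?_⟩
  have hthis := hw a ha
  have ex : ∀ z, Sum.elim (fun i => h (t i)) (fun i => h (w i)) z = h (Sum.elim t w z) := by
    rintro (z | z) <;> rfl
  cases a with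
  | rel s vars =>
      have h2 := hh s _ hthis
      show (fun i => Sum.elim (fun i => h (t i)) (fun i => h (w i)) (vars i)) ∈ Γ.rel s
      have : (fun i => Sum.elim (fun i => h (t i)) (fun i => h (w i)) (vars i))
          = fun i => h (Sum.elim t w (vars i)) := by funext i; exact ex (vars i)
      rw [this]; exact h2
  | eq x y =>
      show Sum.elim _ _ x = Sum.elim _ _ y
      rw [ex x, ex y]
      exact congrArg h hthis

lemma orbitSetEq {Γ : RelStruct σ} {S₁ S₂ : Set Γ.D} {e : Γ.D ≃ Γ.D} (he : IsAuto Γ e)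
    (him : e '' S₁ = S₂) :
    {T | ∃ a : Γ.D ≃ Γ.D, IsAuto Γ a ∧ a '' S₁ = T} =
      {T | ∃ a : Γ.D ≃ Γ.D, IsAuto Γ a ∧ a '' S₂ = T} := by
  ext T
  constructor
  · rintro ⟨a, ha, rfl⟩
    refine ⟨e.symm.trans a, autoTrans (autoSymm he) ha, ?_⟩
    have : ⇑(e.symm.trans a) '' S₂ = ⇑a '' (⇑e.symm '' S₂) := by
      rw [Equiv.coe_trans, Set.image_comp]
    rw [this, ← him, Equiv.symm_image_image]
  · rintro ⟨a, ha, rfl⟩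
    refine ⟨e.trans a, autoTrans he ha, ?_⟩
    rw [Equiv.coe_trans, Set.image_comp, him]

end Aux

/-- If `Δ` and `Γ` are homomorphically equivalent, `Γ` is a core, and every orbit of the
componentwise action of `Aut(Γ)` on `n`-tuples is primitive positive definable in `Γ`,
then for every `n` the number of orbits of `n`-subsets of `Γ` is at most the number of
orbits of `n`-subsets of `Δ`. -/
theorem stmt3 {σ : Signature} (har : ∀ s : σ.symbols, 0 < σ.arity s)
    (Δ Γ : RelStruct σ)
    (f : Δ.D → Γ.D) (g : Γ.D → Δ.D) (hf : IsHom Δ Γ f) (hg : IsHom Γ Δ g)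
    (hcore : IsCore Γ)
    (horb : ∀ (n : ℕ) (t : Fin n → Γ.D),
      PPDefinable Γ {x | ∃ e : Γ.D ≃ Γ.D, IsAuto Γ e ∧ (fun i => e (t i)) = x})
    (n : ℕ) :
    Cardinal.mk ↥(subsetOrbits Γ n) ≤ Cardinal.mk ↥(subsetOrbits Δ n) := by
  classical
  have hfg : IsHom Γ Γ (fun x => f (g x)) := fun s t ht => hf s _ (hg s t ht)
  have hgi : Function.Injective g := by
    intro a b hab
    exact (hcore _ hfg).1 (show f (g a) = f (g b) by rw [hab])
  have hfdg : ∀ d : Δ.D ≃ Δ.D, IsAuto Δ d → IsHom Γ Γ (fun x => f (d (g x))) := by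
    intro d hd s t ht
    exact hf s _ ((hd s _).1 (hg s t ht))
  have key : ∀ (h : Γ.D → Γ.D), IsHom Γ Γ h → ∀ {m : ℕ} (t : Fin m → Γ.D),
      ∃ e : Γ.D ≃ Γ.D, IsAuto Γ e ∧ ∀ i, e (t i) = h (t i) := by
    intro h hh m t
    obtain ⟨φ, hφ⟩ := horb m t
    have ht : ppSat Γ φ t := (hφ t).1 ⟨Equiv.refl _, fun s u => Iff.rfl, rfl⟩
    obtain ⟨e, he, heq⟩ := (hφ (fun i => h (t i))).2 (homPP hh φ ht)
    exact ⟨e, he, fun i => congrFun heq i⟩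
  have enum : ∀ (S : Set Γ.D), S.Finite → S.ncard = n → ∃ t : Fin n → Γ.D, Set.range t = S := by
    intro S hfin hcard
    have : Finite S := hfin
    have hc : Nat.card S = n := by rw [Nat.card_coe_set_eq, hcard]
    let e := Finite.equivFinOfCardEq hc
    refine ⟨fun i => (e.symm i : Γ.D), ?_⟩
    have : (fun i => ((e.symm i : S) : Γ.D)) = Subtype.val ∘ e.symm := rfl
    rw [this, Set.range_comp, Equiv.range_eq_univ, Set.image_univ, Subtype.range_coe]
  -- choose representatives
  have rep : ∀ O : ↥(subsetOrbits Γ n), ∃ S : Set Γ.D, S.Finite ∧ S.ncard = n ∧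
      (O : Set (Set Γ.D)) = {T | ∃ e : Γ.D ≃ Γ.D, IsAuto Γ e ∧ e '' S = T} := fun O => O.2
  choose S hSfin hScard hO using rep
  have memΔ : ∀ O, {T | ∃ d : Δ.D ≃ Δ.D, IsAuto Δ d ∧ d '' (g '' S O) = T} ∈ subsetOrbits Δ n :=
    fun O => ⟨g '' S O, (hSfin O).image g,
      by rw [Set.ncard_image_of_injective _ hgi, hScard], rfl⟩
  refine Cardinal.mk_le_of_injective
    (f := fun O => (⟨_, memΔ O⟩ : ↥(subsetOrbits Δ n))) ?_
  intro O₁ O₂ hEq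
  have hsets : {T | ∃ d : Δ.D ≃ Δ.D, IsAuto Δ d ∧ d '' (g '' S O₁) = T} =
      {T | ∃ d : Δ.D ≃ Δ.D, IsAuto Δ d ∧ d '' (g '' S O₂) = T} := congrArg Subtype.val hEq
  have h12 : ∃ d : Δ.D ≃ Δ.D, IsAuto Δ d ∧ d '' (g '' S O₁) = g '' S O₂ := by
    have : g '' S O₂ ∈ {T | ∃ d : Δ.D ≃ Δ.D, IsAuto Δ d ∧ d '' (g '' S O₂) = T} :=
      ⟨Equiv.refl _, fun s u => Iff.rfl, by simp⟩
    rw [← hsets] at this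
    exact this
  obtain ⟨d, hd, hdim⟩ := h12
  obtain ⟨t₁, ht₁⟩ := enum (S O₁) (hSfin O₁) (hScard O₁)
  obtain ⟨t₂, ht₂⟩ := enum (S O₂) (hSfin O₂) (hScard O₂)
  obtain ⟨e₁, he₁, he₁t⟩ := key (fun x => f (d (g x))) (hfdg d hd) t₁
  obtain ⟨e₂, he₂, he₂t⟩ := key (fun x => f (g x)) hfg t₂
  have img1 : e₁ '' S O₁ = (fun x => f (d (g x))) '' S O₁ := by
    have hc : ⇑e₁ ∘ t₁ = (fun x => f (d (g x))) ∘ t₁ := funext fun i => he₁t i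
    rw [← ht₁, ← Set.range_comp, ← Set.range_comp, hc]
  have img2 : e₂ '' S O₂ = (fun x => f (g x)) '' S O₂ := by
    have hc : ⇑e₂ ∘ t₂ = (fun x => f (g x)) ∘ t₂ := funext fun i => he₂t i
    rw [← ht₂, ← Set.range_comp, ← Set.range_comp, hc]
  have img3 : (fun x => f (d (g x))) '' S O₁ = (fun x => f (g x)) '' S O₂ := by
    have h1 : (fun x => f (d (g x))) '' S O₁ = f '' (d '' (g '' S O₁)) := by
      rw [Set.image_image, Set.image_image]
    have h2 : (fun x => f (g x)) '' S O₂ = f '' (g '' S O₂) := by rw [Set.image_image]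
    rw [h1, h2, hdim]
  have hee : e₂ '' S O₂ = e₁ '' S O₁ := by rw [img1, img2, img3]
  have hSeq : (e₁.trans e₂.symm) '' S O₁ = S O₂ := by
    rw [Equiv.coe_trans, Set.image_comp, ← hee, Equiv.symm_image_image]
  apply Subtype.ext
  rw [hO O₁, hO O₂]
  exact orbitSetEq (autoTrans he₁ (autoSymm he₂)) hSeq
end

section
/- Let Γ be a relational structure of sub-exponential growth, let U and V be two orbits of the action of Aut(Γ) on the domain, and let < be a linear order on U ∪ V that is preserved by every automorphism of Γ. Then U and V are convex with respect to <, i.e., there do not exist u_1, u_2 ∈ U and v ∈ V with u_1 < v < u_2, and symmetrically with the roles of U and V exchanged. -/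
/-- `Γ` has exponential growth: there is a real `c > 1` such that for all sufficiently
large `n`, the number of orbits of `n`-subsets of `Γ` is at least `c ^ n`. -/
def ExpGrowth {σ : Signature} (Γ : RelStruct σ) : Prop :=
  ∃ c : ℝ, 1 < c ∧ ∃ N : ℕ, ∀ n ≥ N,
    (⌈c ^ n⌉₊ : Cardinal) ≤ Cardinal.mk ↥(subsetOrbits Γ n)

/-- The orbit of the element `a` under `Aut(Γ)`. -/
def orbitOf {σ : Signature} (Γ : RelStruct σ) (a : Γ.D) : Set Γ.D :=
  {x | ∃ e : Γ.D ≃ Γ.D, IsAuto Γ e ∧ e a = x}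

/-- `U` is an orbit of the action of `Aut(Γ)` on the domain. -/
def IsOrbit {σ : Signature} (Γ : RelStruct σ) (U : Set Γ.D) : Prop :=
  ∃ a : Γ.D, U = orbitOf Γ a

section Aux

variable {σ : Signature} (Γ : RelStruct σ)

lemma isAuto_refl : IsAuto Γ (Equiv.refl Γ.D) := fun _ _ => Iff.rfl

lemma isAuto_trans {e f : Γ.D ≃ Γ.D} (he : IsAuto Γ e) (hf : IsAuto Γ f) :
    IsAuto Γ (e.trans f) := fun s t => (he s t).trans (hf s fun i => e (t i))

lemma isAuto_symm {e : Γ.D ≃ Γ.D} (he : IsAuto Γ e) : IsAuto Γ e.symm := by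
  intro s t
  have h := he s fun i => e.symm (t i)
  simpa using h.symm

lemma orbit_trans {U : Set Γ.D} (hU : IsOrbit Γ U) {x y : Γ.D} (hx : x ∈ U) (hy : y ∈ U) :
    ∃ e : Γ.D ≃ Γ.D, IsAuto Γ e ∧ e x = y := by
  obtain ⟨a, rfl⟩ := hU
  obtain ⟨e, he, rfl⟩ := hx
  obtain ⟨f, hf, rfl⟩ := hy
  exact ⟨e.symm.trans f, isAuto_trans Γ (isAuto_symm Γ he) hf, by simp⟩

lemma orbit_inv {U : Set Γ.D} (hU : IsOrbit Γ U) {e : Γ.D ≃ Γ.D} (he : IsAuto Γ e)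
    {x : Γ.D} (hx : x ∈ U) : e x ∈ U := by
  obtain ⟨a, rfl⟩ := hU
  obtain ⟨f, hf, rfl⟩ := hx
  exact ⟨f.trans e, isAuto_trans Γ hf he, rfl⟩

lemma orbit_disjoint {U V : Set Γ.D} (hU : IsOrbit Γ U) (hV : IsOrbit Γ V) (hne : U ≠ V)
    {x : Γ.D} (hx : x ∈ U) (hx' : x ∈ V) : False := by
  apply hne
  obtain ⟨a, rfl⟩ := hU
  obtain ⟨b, rfl⟩ := hV
  obtain ⟨e, he, hex⟩ := hx
  obtain ⟨f, hf, hfx⟩ := hx'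
  ext y
  simp only [orbitOf, Set.mem_setOf_eq]
  constructor
  · rintro ⟨g, hg, rfl⟩
    refine ⟨f.trans (e.symm.trans g), isAuto_trans Γ hf (isAuto_trans Γ (isAuto_symm Γ he) hg), ?_⟩
    show g (e.symm (f b)) = g a
    rw [hfx, ← hex, Equiv.symm_apply_apply]
  · rintro ⟨g, hg, rfl⟩
    refine ⟨e.trans (f.symm.trans g), isAuto_trans Γ he (isAuto_trans Γ (isAuto_symm Γ hf) hg), ?_⟩
    show g (f.symm (e a)) = g b
    rw [hex, ← hfx, Equiv.symm_apply_apply]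

lemma expGrowth_of_chain (U V : Set Γ.D)
    (hUo : IsOrbit Γ U) (hVo : IsOrbit Γ V) (hUV : U ≠ V)
    (lt : Γ.D → Γ.D → Prop)
    (hirrefl : ∀ x ∈ U ∪ V, ¬ lt x x)
    (htrans : ∀ x ∈ U ∪ V, ∀ y ∈ U ∪ V, ∀ z ∈ U ∪ V, lt x y → lt y z → lt x z)
    (hpres : ∀ e : Γ.D ≃ Γ.D, IsAuto Γ e → ∀ x ∈ U ∪ V, ∀ y ∈ U ∪ V, lt x y → lt (e x) (e y))
    (u v : ℕ → Γ.D) (hu : ∀ k, u k ∈ U) (hv : ∀ k, v k ∈ V)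
    (h1 : ∀ k, lt (u k) (v k)) (h2 : ∀ k, lt (v k) (u (k + 1))) :
    ExpGrowth Γ := by
  have hum : ∀ k, u k ∈ U ∪ V := fun k => Or.inl (hu k)
  have hvm : ∀ k, v k ∈ U ∪ V := fun k => Or.inr (hv k)
  have asymm : ∀ x ∈ U ∪ V, ∀ y ∈ U ∪ V, lt x y → lt y x → False :=
    fun x hx y hy h h' => hirrefl x hx (htrans x hx y hy x hx h h')
  have mono_u : ∀ k l, k < l → lt (u k) (u l) := by
    intro k l h
    induction l with
    | zero => omega
    | succ m ih =>
      rcases Nat.lt_or_ge k m with h' | h'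
      · exact htrans _ (hum k) _ (hum m) _ (hum (m + 1)) (ih h')
          (htrans _ (hum m) _ (hvm m) _ (hum (m + 1)) (h1 m) (h2 m))
      · have : k = m := by omega
        subst this
        exact htrans _ (hum k) _ (hvm k) _ (hum (k + 1)) (h1 k) (h2 k)
  have huv : ∀ k l, k ≤ l → lt (u k) (v l) := by
    intro k l h
    rcases eq_or_lt_of_le h with rfl | h'
    · exact h1 k
    · exact htrans _ (hum k) _ (hum l) _ (hvm l) (mono_u k l h') (h1 l)
  have hvu : ∀ k l, k < l → lt (v k) (u l) := by
    intro k l h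
    rcases eq_or_lt_of_le (Nat.succ_le_of_lt h) with h' | h'
    · rw [← h']; exact h2 k
    · exact htrans _ (hvm k) _ (hum (k + 1)) _ (hum l) (h2 k) (mono_u (k + 1) l h')
  have hvv : ∀ k l, k < l → lt (v k) (v l) := fun k l h =>
    htrans _ (hvm k) _ (hum l) _ (hvm l) (hvu k l h) (h1 l)
  refine ⟨2, one_lt_two, 0, fun n _ => ?_⟩
  -- for each pattern `p`, an `n`-element set alternating in `U` and `V` according to `p`
  set a : (Fin n → Bool) → Fin n → Γ.D :=
    fun p i => if p i then v i else u i with ha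
  have hmemU : ∀ p (i : Fin n), p i = false → a p i ∈ U := by
    intro p i h; simp [ha, h, hu]
  have hmemV : ∀ p (i : Fin n), p i = true → a p i ∈ V := by
    intro p i h; simp [ha, h, hv]
  have hmem : ∀ p (i : Fin n), a p i ∈ U ∪ V := by
    intro p i
    cases h : p i
    · exact Or.inl (hmemU p i h)
    · exact Or.inr (hmemV p i h)
  have hmono : ∀ p (i j : Fin n), i < j → lt (a p i) (a p j) := by
    intro p i j hij
    have hij' : (i : ℕ) < (j : ℕ) := hij
    cases hi : p i <;> cases hj : p j <;> simp [ha, hi, hj]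
    · exact mono_u _ _ hij'
    · exact huv _ _ (le_of_lt hij')
    · exact hvu _ _ hij'
    · exact hvv _ _ hij'
  have hinj : ∀ p, Function.Injective (a p) := by
    intro p i j h
    rcases lt_trichotomy i j with h' | h' | h'
    · exact absurd (h ▸ hmono p i j h') (hirrefl _ (hmem p j))
    · exact h'
    · exact absurd (h ▸ hmono p j i h') (hirrefl _ (hmem p j))
  have hcard : ∀ p, (Set.range (a p)).ncard = n := by
    intro p
    rw [← Nat.card_coe_set_eq, Nat.card_range_of_injective (hinj p), Nat.card_eq_fintype_card,
      Fintype.card_fin]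
  -- an automorphism mapping one pattern set onto another forces equal patterns
  have hpattern : ∀ p q (e : Γ.D ≃ Γ.D), IsAuto Γ e →
      e '' Set.range (a p) = Set.range (a q) → p = q := by
    intro p q e he himg
    have hrange : Set.range (fun i => e (a p i)) = Set.range (a q) := by
      show Set.range (⇑e ∘ a p) = Set.range (a q)
      rw [Set.range_comp, himg]
    have hφ : ∀ i : Fin n, ∃ j : Fin n, a q j = e (a p i) := by
      intro i
      have : e (a p i) ∈ Set.range (a q) := by
        rw [← hrange]; exact ⟨i, rfl⟩
      obtain ⟨j, hj⟩ := this
      exact ⟨j, hj⟩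
    choose φ hφ using hφ
    have hφmono : StrictMono φ := by
      intro i j hij
      have hlt : lt (e (a p i)) (e (a p j)) :=
        hpres e he _ (hmem p i) _ (hmem p j) (hmono p i j hij)
      rw [← hφ i, ← hφ j] at hlt
      rcases lt_trichotomy (φ i) (φ j) with h | h | h
      · exact h
      · rw [h] at hlt; exact absurd hlt (hirrefl _ (hmem q (φ j)))
      · exact absurd (hmono q _ _ h) fun h' =>
          asymm _ (hmem q (φ j)) _ (hmem q (φ i)) h' hlt
    have hφsurj : Function.Surjective φ :=
      Finite.surjective_of_injective hφmono.injective
    have hφid : φ = id := by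
      have hwf : WellFoundedLT (Fin n) := inferInstance
      have hr : Set.range φ = Set.range (id : Fin n → Fin n) := by
        rw [Set.range_id, Set.range_eq_univ]
        exact hφsurj
      exact (hφmono.range_inj strictMono_id).1 hr
    have heq : ∀ i : Fin n, a q i = e (a p i) := by
      intro i
      have := hφ i
      rwa [hφid] at this
    funext i
    cases hpi : p i <;> cases hqi : q i
    · rfl
    · exfalso
      have h1' : e (a p i) ∈ U := orbit_inv Γ hUo he (hmemU p i hpi)
      rw [← heq i] at h1'
      exact orbit_disjoint Γ hUo hVo hUV h1' (hmemV q i hqi)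
    · exfalso
      have h1' : e (a p i) ∈ V := orbit_inv Γ hVo he (hmemV p i hpi)
      rw [← heq i] at h1'
      exact orbit_disjoint Γ hUo hVo hUV (hmemU q i hqi) h1'
    · rfl
  -- injection from patterns into orbits of `n`-subsets
  set F : (Fin n → Bool) → ↥(subsetOrbits Γ n) :=
    fun p => ⟨{T | ∃ e : Γ.D ≃ Γ.D, IsAuto Γ e ∧ e '' Set.range (a p) = T},
      ⟨Set.range (a p), Set.finite_range _, hcard p, rfl⟩⟩ with hF
  have hFinj : Function.Injective F := by
    intro p q h
    have hq : Set.range (a q) ∈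
        {T | ∃ e : Γ.D ≃ Γ.D, IsAuto Γ e ∧ e '' Set.range (a q) = T} :=
      ⟨Equiv.refl _, isAuto_refl Γ, by simp⟩
    have hset : {T | ∃ e : Γ.D ≃ Γ.D, IsAuto Γ e ∧ e '' Set.range (a p) = T} =
        {T | ∃ e : Γ.D ≃ Γ.D, IsAuto Γ e ∧ e '' Set.range (a q) = T} :=
      congrArg Subtype.val h
    rw [← hset] at hq
    obtain ⟨e, he, hee⟩ := hq
    exact hpattern p q e he hee
  have hle : Cardinal.mk (Fin n → Bool) ≤ Cardinal.mk ↥(subsetOrbits Γ n) :=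
    Cardinal.mk_le_of_injective hFinj
  have hmk : Cardinal.mk (Fin n → Bool) = ((2 ^ n : ℕ) : Cardinal) := by
    simp [Cardinal.mk_fintype]
  have hceil : ⌈(2 : ℝ) ^ n⌉₊ = 2 ^ n := by
    have : ((2 : ℝ)) ^ n = ((2 ^ n : ℕ) : ℝ) := by push_cast; ring
    rw [this, Nat.ceil_natCast]
  have hfinal : (⌈(2 : ℝ) ^ n⌉₊ : Cardinal) = Cardinal.mk (Fin n → Bool) := by
    rw [hceil]
    exact hmk.symm
  rw [hfinal]
  exact hle

lemma convex_aux (U V : Set Γ.D)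
    (hUo : IsOrbit Γ U) (hVo : IsOrbit Γ V) (hUV : U ≠ V)
    (lt : Γ.D → Γ.D → Prop)
    (hirrefl : ∀ x ∈ U ∪ V, ¬ lt x x)
    (htrans : ∀ x ∈ U ∪ V, ∀ y ∈ U ∪ V, ∀ z ∈ U ∪ V, lt x y → lt y z → lt x z)
    (hpres : ∀ e : Γ.D ≃ Γ.D, IsAuto Γ e → ∀ x ∈ U ∪ V, ∀ y ∈ U ∪ V, lt x y → lt (e x) (e y))
    (hex : ∃ u₁ ∈ U, ∃ u₂ ∈ U, ∃ v ∈ V, lt u₁ v ∧ lt v u₂) :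
    ExpGrowth Γ := by
  obtain ⟨u₁, hu₁, u₂, hu₂, v₀, hv₀, hl1, hl2⟩ := hex
  have hstep : ∀ a : ↥U, ∃ b : ↥V × ↥U, lt a b.1 ∧ lt (b.1 : Γ.D) b.2 := by
    rintro ⟨x, hx⟩
    obtain ⟨e, he, hea⟩ := orbit_trans Γ hUo hu₁ hx
    refine ⟨(⟨e v₀, orbit_inv Γ hVo he hv₀⟩, ⟨e u₂, orbit_inv Γ hUo he hu₂⟩), ?_, ?_⟩
    · have := hpres e he u₁ (Or.inl hu₁) v₀ (Or.inr hv₀) hl1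
      rwa [hea] at this
    · exact hpres e he v₀ (Or.inr hv₀) u₂ (Or.inl hu₂) hl2
  choose Fs hF1 hF2 using hstep
  let uu : ℕ → ↥U := fun n => Nat.rec ⟨u₁, hu₁⟩ (fun _ a => (Fs a).2) n
  have hsucc : ∀ k, uu (k + 1) = (Fs (uu k)).2 := fun k => rfl
  have hc2 : ∀ k, lt ((Fs (uu k)).1).val (uu (k + 1)).val := by
    intro k
    rw [hsucc k]
    exact hF2 (uu k)
  have hmu : ∀ k, (uu k).val ∈ U := fun k => (uu k).2
  have hmv : ∀ k, ((Fs (uu k)).1).val ∈ V := fun k => (Fs (uu k)).1.2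
  have hc1 : ∀ k, lt (uu k).val ((Fs (uu k)).1).val := fun k => hF1 (uu k)
  exact expGrowth_of_chain Γ U V hUo hVo hUV lt hirrefl htrans hpres
    (fun k => (uu k).val) (fun k => ((Fs (uu k)).1).val) hmu hmv hc1 hc2

end Aux

/-- If `Γ` has sub-exponential growth, `U ≠ V` are orbits of `Aut(Γ)` on the domain, and
`lt` is a linear order on `U ∪ V` preserved by all automorphisms of `Γ`, then `U` and `V`
are convex with respect to `lt`. -/
theorem stmt6 {σ : Signature} (har : ∀ s : σ.symbols, 0 < σ.arity s)
    (Γ : RelStruct σ) (hsub : ¬ ExpGrowth Γ)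
    (U V : Set Γ.D) (hU : IsOrbit Γ U) (hV : IsOrbit Γ V) (hUV : U ≠ V)
    (lt : Γ.D → Γ.D → Prop)
    (hirrefl : ∀ x ∈ U ∪ V, ¬ lt x x)
    (htrans : ∀ x ∈ U ∪ V, ∀ y ∈ U ∪ V, ∀ z ∈ U ∪ V, lt x y → lt y z → lt x z)
    (htotal : ∀ x ∈ U ∪ V, ∀ y ∈ U ∪ V, x = y ∨ lt x y ∨ lt y x)
    (hpres : ∀ e : Γ.D ≃ Γ.D, IsAuto Γ e → ∀ x ∈ U ∪ V, ∀ y ∈ U ∪ V, lt x y → lt (e x) (e y)) :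
    (¬ ∃ u₁ ∈ U, ∃ u₂ ∈ U, ∃ v ∈ V, lt u₁ v ∧ lt v u₂) ∧
    (¬ ∃ v₁ ∈ V, ∃ v₂ ∈ V, ∃ u ∈ U, lt v₁ u ∧ lt u v₂) := by
  constructor
  · intro hex
    exact hsub (convex_aux Γ U V hU hV hUV lt hirrefl htrans hpres hex)
  · intro hex
    refine hsub (convex_aux Γ V U hV hU hUV.symm lt ?_ ?_ ?_ hex)
    · rw [Set.union_comm]; exact hirrefl
    · rw [Set.union_comm]; exact htrans
    · simp only [Set.union_comm V U]; exact hpres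
end

section
/- Let R and S be binary relations on a set D that are both preserved by a totally symmetric function f : D^n → D of arity n ≥ 1. If there is an alternating closed walk on R and S of length 2n, i.e., elements x_0, x_1, …, x_{2n} ∈ D with x_{2n} = x_0 such that (x_{2i}, x_{2i+1}) ∈ R and (x_{2i+1}, x_{2i+2}) ∈ S for all 0 ≤ i < n, then there exist y, z ∈ D with (y,z) ∈ R and (z,y) ∈ S. -/
/-- If the binary relations `R` and `S` are preserved by a totally symmetric `n`-ary
operation `f` (`n ≥ 1`), and there is an alternating closed walk on `R` and `S` of
length `2n`, then `R ∩ S⁻¹ ≠ ∅`. -/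
theorem stmt8 {D : Type} (n : ℕ) (hn : 1 ≤ n) (R S : D → D → Prop)
    (f : (Fin n → D) → D) (hts : TotallySymmetric f)
    (hR : ∀ a b : Fin n → D, (∀ i, R (a i) (b i)) → R (f a) (f b))
    (hS : ∀ a b : Fin n → D, (∀ i, S (a i) (b i)) → S (f a) (f b))
    (x : ℕ → D) (hclosed : x (2 * n) = x 0)
    (hxR : ∀ i < n, R (x (2 * i)) (x (2 * i + 1)))
    (hxS : ∀ i < n, S (x (2 * i + 1)) (x (2 * i + 2))) :
    ∃ y z : D, R y z ∧ S z y := by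
  haveI : NeZero n := ⟨Nat.one_le_iff_ne_zero.mp hn⟩
  set a : Fin n → D := fun i => x (2 * i.val) with ha
  set b : Fin n → D := fun i => x (2 * i.val + 1) with hb
  set a' : Fin n → D := fun i => x (2 * i.val + 2) with ha'
  have key : a' = a ∘ (fun i : Fin n => i + 1) := by
    funext i
    simp only [ha, ha', Function.comp]
    by_cases h : i.val + 1 < n
    · have : ((i + 1 : Fin n)).val = i.val + 1 := by
        simp [Fin.add_def, Nat.mod_eq_of_lt h]
      rw [this]; ring_nf
    · have hiv : i.val + 1 = n := by omega
      have : ((i + 1 : Fin n)).val = 0 := by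
        simp [Fin.add_def, hiv]
      rw [this]
      have : 2 * i.val + 2 = 2 * n := by omega
      rw [this, hclosed]
  have hrange : Set.range a' = Set.range a := by
    rw [key]
    exact Function.Surjective.range_comp (fun j => ⟨j - 1, sub_add_cancel j 1⟩) a
  refine ⟨f a, f b, hR a b (fun i => hxR i.val i.isLt), ?_⟩
  have hfa : f a' = f a := hts a' a hrange
  have : S (f b) (f a') := hS b a' (fun i => hxS i.val i.isLt)
  rwa [hfa] at this
end

section
/- Let G be a group of permutations of a set D that has finitely many orbitals (orbits of the componentwise action of G on D × D). Suppose that for every n ≥ 1 there is a totally symmetric n-ary function f_n : D^n → D that preserves every orbital of G. Let E be a G-invariant equivalence relation on D and let X be an equivalence class of E. If α ∈ G satisfies α^m(X) = X for some integer m > 0, then α(X) = X. -/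
/-- The orbital of the pair `(a, b)` under the permutation group `G`: the orbit of the
componentwise action of `G` on ordered pairs. -/
def orbital {D : Type} (G : Subgroup (Equiv.Perm D)) (a b : D) : Set (D × D) :=
  {p | ∃ g ∈ G, g a = p.1 ∧ g b = p.2}

/-- The `n`-ary operation `f` preserves the binary relation `O ⊆ D × D`. -/
def PreservesPairs {D : Type} {n : ℕ} (f : (Fin n → D) → D) (O : Set (D × D)) : Prop :=
  ∀ a b : Fin n → D, (∀ i, (a i, b i) ∈ O) → (f a, f b) ∈ O

/-- Let `G` be a permutation group with finitely many orbitals, such that for every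
`n ≥ 1` there is a totally symmetric `n`-ary operation preserving every orbital of `G`.
If `E` is a `G`-invariant equivalence relation, `X` the `E`-class of `a`, and `α ∈ G`
satisfies `α^m(X) = X` for some `m > 0`, then `α(X) = X`. -/
theorem stmt9 {D : Type} (G : Subgroup (Equiv.Perm D))
    (horbs : ∃ F : Set (D × D), F.Finite ∧
      ∀ p : D × D, ∃ q ∈ F, p ∈ orbital G q.1 q.2)
    (hts : ∀ n : ℕ, 1 ≤ n → ∃ f : (Fin n → D) → D, TotallySymmetric f ∧
      ∀ a b : D, PreservesPairs f (orbital G a b))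
    (E : D → D → Prop) (hE : Equivalence E)
    (hinv : ∀ g ∈ G, ∀ x y : D, E x y → E (g x) (g y))
    (a : D) (α : Equiv.Perm D) (hα : α ∈ G) (m : ℕ) (hm : 0 < m)
    (hfix : (α ^ m) '' {y | E a y} = {y | E a y}) :
    α '' {y | E a y} = {y | E a y} := by
  classical
  obtain ⟨F, hFfin, hF⟩ := horbs
  set s : ℕ → D := fun t => (α ^ t) a with hsdef
  have hs_add : ∀ i t : ℕ, (α ^ i) (s t) = s (i + t) := by
    intro i t
    show (α ^ i) ((α ^ t) a) = (α ^ (i + t)) a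
    rw [pow_add, Equiv.Perm.mul_apply]
  have hs0 : s 0 = a := by show (α ^ 0) a = a; simp
  have hs1 : s 1 = α a := by show (α ^ 1) a = α a; simp
  -- E a (s (r*m)) for all r
  have hEm : ∀ r : ℕ, E a (s (r * m)) := by
    intro r
    induction r with
    | zero =>
      have h0 : s (0 * m) = a := by rw [Nat.zero_mul, hs0]
      rw [h0]; exact hE.refl a
    | succ r ih =>
      have h2 : (α ^ m) (s (r * m)) ∈ (α ^ m) '' {y | E a y} :=
        Set.mem_image_of_mem _ ih
      rw [hfix] at h2
      have h3 : (α ^ m) (s (r * m)) = s ((r + 1) * m) := by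
        rw [hs_add]; congr 1; ring
      rwa [h3] at h2
  -- pigeonhole on orbitals
  have hc : ∀ jj : ℕ, ∃ qq ∈ F, ((a, s (1 + jj * m)) : D × D) ∈ orbital G qq.1 qq.2 :=
    fun jj => hF _
  choose q hqF hq using hc
  haveI : Finite ↥F := hFfin.to_subtype
  obtain ⟨j1, j2, hne, heq⟩ :=
    Finite.exists_ne_map_eq_of_infinite (fun jj : ℕ => (⟨q jj, hqF jj⟩ : F))
  have heq' : q j1 = q j2 := congrArg Subtype.val heq
  have hex : ∃ j j' : ℕ, j < j' ∧ q j = q j' := by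
    rcases lt_or_gt_of_ne hne with h | h
    · exact ⟨j1, j2, h, heq'⟩
    · exact ⟨j2, j1, h, heq'.symm⟩
  obtain ⟨j, j', hjj, hqeq⟩ := hex
  obtain ⟨h1, h1G, h1a, h1b⟩ := hq j
  obtain ⟨h2, h2G, h2a, h2b⟩ := hq j'
  have h1a' : h1 (q j).1 = a := h1a
  have h1b' : h1 (q j).2 = s (1 + j * m) := h1b
  have h2a' : h2 (q j').1 = a := h2a
  have h2b' : h2 (q j').2 = s (1 + j' * m) := h2b
  have hEu : E a (s (j * m)) := hEm j
  have hEv : E a (s (j' * m)) := hEm j'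
  have huv : j * m + m ≤ j' * m := by
    calc j * m + m = (j + 1) * m := by ring
      _ ≤ j' * m := Nat.mul_le_mul_right m hjj
  -- abstract the nonlinear terms
  obtain ⟨u, hu⟩ : ∃ u, j * m = u := ⟨_, rfl⟩
  obtain ⟨v, hv⟩ : ∃ v, j' * m = v := ⟨_, rfl⟩
  rw [hu] at hEu h1b' huv
  rw [hv] at hEv h2b' huv
  -- the group element g := h2 * h1⁻¹ fixes a, sends s (1+u) to s (1+v)
  have hgG : h2 * h1⁻¹ ∈ G := mul_mem h2G (inv_mem h1G)
  have hga : (h2 * h1⁻¹) a = a := by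
    have e1 : h1⁻¹ a = (q j).1 := by rw [← h1a']; exact Equiv.symm_apply_apply h1 _
    rw [Equiv.Perm.mul_apply, e1, hqeq, h2a']
  have hgk : (h2 * h1⁻¹) (s (1 + u)) = s (1 + v) := by
    have e1 : h1⁻¹ (s (1 + u)) = (q j).2 := by
      rw [← h1b']; exact Equiv.symm_apply_apply h1 _
    rw [Equiv.Perm.mul_apply, e1, hqeq, h2b']
  have hd1 : 1 ≤ v - u := by omega
  obtain ⟨f, hfsym, hfpres⟩ := hts (v - u) hd1
  set x : Fin (v - u) → D := fun i => s i.val with hxdef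
  set x' : Fin (v - u) → D := fun i => s (v + i.val) with hx'def
  set y : Fin (v - u) → D := fun i =>
    if (i : ℕ) + 1 = v - u then s v else s ((1 + v) + i.val) with hydef
  have claimA : ∀ i : Fin (v - u), (x i, y i) ∈ orbital G a (s (1 + u)) := by
    intro i
    by_cases hi : (i : ℕ) + 1 = v - u
    · refine ⟨α ^ (i : ℕ), pow_mem hα _, rfl, ?_⟩
      show (α ^ (i : ℕ)) (s (1 + u)) = y i
      rw [hs_add, hydef]
      simp only [if_pos hi]
      congr 1
      omega
    · refine ⟨α ^ (i : ℕ) * (h2 * h1⁻¹), mul_mem (pow_mem hα _) hgG, ?_, ?_⟩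
      · show (α ^ (i : ℕ) * (h2 * h1⁻¹)) a = x i
        rw [Equiv.Perm.mul_apply, hga]
      · show (α ^ (i : ℕ) * (h2 * h1⁻¹)) (s (1 + u)) = y i
        rw [Equiv.Perm.mul_apply, hgk, hs_add, hydef]
        simp only [if_neg hi]
        congr 1
        omega
  have claimB : ∀ i : Fin (v - u), (x i, x' i) ∈ orbital G a (s v) := by
    intro i
    refine ⟨α ^ (i : ℕ), pow_mem hα _, rfl, ?_⟩
    show (α ^ (i : ℕ)) (s v) = x' i
    rw [hs_add]
    show s ((i : ℕ) + v) = s (v + (i : ℕ))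
    congr 1
    omega
  have hrange : Set.range y = Set.range x' := by
    ext z
    constructor
    · rintro ⟨i, rfl⟩
      by_cases hi : (i : ℕ) + 1 = v - u
      · refine ⟨⟨0, by omega⟩, ?_⟩
        show s (v + 0) = y i
        rw [hydef]
        simp [if_pos hi]
      · refine ⟨⟨(i : ℕ) + 1, by omega⟩, ?_⟩
        show s (v + ((i : ℕ) + 1)) = y i
        rw [hydef]
        simp only [if_neg hi]
        congr 1
        omega
    · rintro ⟨i, rfl⟩
      by_cases hi : (i : ℕ) = 0
      · refine ⟨⟨v - u - 1, by omega⟩, ?_⟩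
        show y _ = x' i
        rw [hydef, hx'def]
        simp only []
        rw [if_pos (by omega : (v - u - 1) + 1 = v - u)]
        congr 1
        omega
      · refine ⟨⟨(i : ℕ) - 1, by omega⟩, ?_⟩
        show y _ = x' i
        rw [hydef, hx'def]
        simp only []
        rw [if_neg (by omega : ¬(((i : ℕ) - 1) + 1 = v - u))]
        congr 1
        omega
  have hOA : (f x, f y) ∈ orbital G a (s (1 + u)) := hfpres a (s (1 + u)) x y claimA
  have hOB : (f x, f x') ∈ orbital G a (s v) := hfpres a (s v) x x' claimB
  obtain ⟨hB, hBG, hB1, hB2⟩ := hOB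
  have hB1' : hB a = f x := hB1
  have hB2' : hB (s v) = f x' := hB2
  have hExx' : E (f x) (f x') := by
    have h := hinv hB hBG a (s v) hEv
    rwa [hB1', hB2'] at h
  have hyx' : f y = f x' := hfsym y x' hrange
  have hExy : E (f x) (f y) := by rw [hyx']; exact hExx'
  obtain ⟨hA, hAG, hA1, hA2⟩ := hOA
  have hA1' : hA a = f x := hA1
  have hA2' : hA (s (1 + u)) = f y := hA2
  have hEak : E a (s (1 + u)) := by
    have h' : E (hA a) (hA (s (1 + u))) := by rw [hA1', hA2']; exact hExy
    have h'' := hinv hA⁻¹ (inv_mem hAG) _ _ h'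
    simpa only [Equiv.Perm.coe_inv, Equiv.symm_apply_apply] using h''
  have hE1k : E (s 1) (s (1 + u)) := by
    have h := hinv α hα a (s u) hEu
    have e : α (s u) = s (1 + u) := by
      have := hs_add 1 u
      rwa [pow_one] at this
    rwa [← hs1, e] at h
  have hEa1 : E a (s 1) := hE.trans hEak (hE.symm hE1k)
  have hEaα : E a (α a) := by rwa [hs1] at hEa1
  -- conclude
  ext z
  simp only [Set.mem_image, Set.mem_setOf_eq]
  constructor
  · rintro ⟨y0, hy0, rfl⟩
    exact hE.trans hEaα (hinv α hα a y0 hy0)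
  · intro hz
    refine ⟨α⁻¹ z, ?_, Equiv.apply_symm_apply α z⟩
    have hinva : E (α⁻¹ a) (α⁻¹ z) := hinv α⁻¹ (inv_mem hα) a z hz
    have h2' : E (α⁻¹ a) a := by
      have h := hinv α⁻¹ (inv_mem hα) a (α a) hEaα
      simpa only [Equiv.Perm.coe_inv, Equiv.symm_apply_apply] using h
    exact hE.trans (hE.symm h2') hinva
end

section
/- Let G be a group of permutations of the rationals ℚ that contains every order-preserving permutation of (ℚ, <). Suppose that for every n ≥ 1 there is a totally symmetric n-ary function f : ℚ^n → ℚ preserving every orbital of G. Then every element of G preserves the order <, and consequently G is exactly the group Aut(ℚ;<) of order-preserving permutations of ℚ. -/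
private def phiFun (p q r s : ℚ) (t : ℚ) : ℚ :=
  if t ≤ p then t - p + r else if t ≤ q then r + (t - p) * ((s - r) / (q - p)) else t - q + s

private lemma phi_strictMono (p q r s : ℚ) (hpq : p < q) (hrs : r < s) :
    StrictMono (phiFun p q r s) := by
  intro t1 t2 h
  have hcpos : 0 < (s - r) / (q - p) := div_pos (by linarith) (by linarith)
  have hqc : (q - p) * ((s - r) / (q - p)) = s - r :=
    mul_div_cancel₀ (s - r) (by linarith : q - p ≠ 0)
  unfold phiFun
  split_ifs with h1 h2 h3 h4 h5 h6 h7
  · linarith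
  · nlinarith [mul_pos (by linarith : (0:ℚ) < t2 - p) hcpos]
  · linarith
  · linarith
  · nlinarith [mul_lt_mul_of_pos_right (by linarith : t1 - p < t2 - p) hcpos]
  · nlinarith [mul_le_mul_of_nonneg_right (by linarith : t1 - p ≤ q - p) hcpos.le]
  · linarith
  · linarith
  · linarith

private lemma phi_surj (p q r s : ℚ) (hpq : p < q) (hrs : r < s) :
    Function.Surjective (phiFun p q r s) := by
  intro y
  have hcpos : 0 < (s - r) / (q - p) := div_pos (by linarith) (by linarith)
  have hdpos : 0 < (q - p) / (s - r) := div_pos (by linarith) (by linarith)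
  rcases le_or_gt y r with hy | hy
  · exact ⟨y - r + p, by unfold phiFun; rw [if_pos (by linarith)]; ring⟩
  · rcases le_or_gt y s with hy2 | hy2
    · refine ⟨p + (y - r) * ((q - p) / (s - r)), ?_⟩
      have h1 : ¬ (p + (y - r) * ((q - p) / (s - r)) ≤ p) := by
        nlinarith [mul_pos (by linarith : (0:ℚ) < y - r) hdpos]
      have h2 : p + (y - r) * ((q - p) / (s - r)) ≤ q := by
        nlinarith [mul_le_mul_of_nonneg_right (by linarith : y - r ≤ s - r) hdpos.le,
          mul_div_cancel₀ (q - p) (by linarith : s - r ≠ 0)]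
      unfold phiFun
      rw [if_neg h1, if_pos h2]
      have hne1 : s - r ≠ 0 := by linarith
      have hne2 : q - p ≠ 0 := by linarith
      have : (y - r) * ((q - p) / (s - r)) * ((s - r) / (q - p)) = y - r := by
        field_simp
      nlinarith [this]
    · refine ⟨y - s + q, ?_⟩
      unfold phiFun
      rw [if_neg (by linarith), if_neg (by linarith)]
      ring

private lemma exists_strictMono_perm (p q r s : ℚ) (hpq : p < q) (hrs : r < s) :
    ∃ h : Equiv.Perm ℚ, StrictMono ⇑h ∧ h p = r ∧ h q = s := by
  have hsm := phi_strictMono p q r s hpq hrs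
  have hsurj := phi_surj p q r s hpq hrs
  refine ⟨(StrictMono.orderIsoOfSurjective _ hsm hsurj).toEquiv, ?_, ?_, ?_⟩
  · intro a b hab
    simpa using hsm hab
  · show phiFun p q r s p = r
    unfold phiFun; rw [if_pos le_rfl]; ring
  · show phiFun p q r s q = s
    unfold phiFun
    rw [if_neg (by linarith), if_pos le_rfl]
    have hne2 : q - p ≠ 0 := by linarith
    field_simp
    ring


/-- Let `G` be a group of permutations of `ℚ` containing all order-preserving
permutations of `(ℚ, <)`, and suppose for every `n ≥ 1` there is a totally symmetric
`n`-ary operation on `ℚ` preserving every orbital of `G`. Then every element of `G`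
preserves `<`; that is, `G` is exactly the group `Aut(ℚ; <)` of order-preserving
permutations of `ℚ`. -/
theorem stmt12 (G : Subgroup (Equiv.Perm ℚ))
    (hcontains : ∀ g : Equiv.Perm ℚ, StrictMono ⇑g → g ∈ G)
    (hts : ∀ n : ℕ, 1 ≤ n → ∃ f : (Fin n → ℚ) → ℚ, TotallySymmetric f ∧
      ∀ a b : ℚ, PreservesPairs f (orbital G a b)) :
    ∀ g : Equiv.Perm ℚ, g ∈ G ↔ StrictMono ⇑g := by
  intro g
  refine ⟨fun hg => ?_, hcontains g⟩
  by_contra hmono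
  simp only [StrictMono, not_forall] at hmono
  obtain ⟨a, b, hab, hgab⟩ := hmono
  have hgba : g b < g a := by
    rcases lt_trichotomy (g a) (g b) with h | h | h
    · exact absurd h hgab
    · exact absurd (g.injective h) (ne_of_lt hab)
    · exact h
  obtain ⟨f, hfs, hfp⟩ := hts 2 (by norm_num)
  -- (a, b) ∈ orbital G a b
  have hmem1 : (a, b) ∈ orbital G a b := ⟨1, G.one_mem, rfl, rfl⟩
  -- (b, a) ∈ orbital G a b
  obtain ⟨h, hhsm, hh1, hh2⟩ := exists_strictMono_perm (g b) (g a) a b hgba hab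
  have hmem2 : (b, a) ∈ orbital G a b := by
    refine ⟨g.trans h, G.mul_mem (hcontains h hhsm) hg, ?_, ?_⟩
    · simpa using hh2
    · simpa using hh1
  -- elements of the orbital have distinct coordinates
  have hne : ∀ p ∈ orbital G a b, (p : ℚ × ℚ).1 ≠ p.2 := by
    rintro p ⟨g', _, h1, h2⟩
    rw [← h1, ← h2]
    exact fun hEq => (ne_of_lt hab) (g'.injective hEq)
  have hkey := hfp a b ![a, b] ![b, a] (by
    intro i
    fin_cases i
    · exact hmem1
    · exact hmem2)
  have heq : f ![a, b] = f ![b, a] := by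
    apply hfs
    ext x
    constructor
    · rintro ⟨i, rfl⟩
      fin_cases i
      · exact ⟨1, rfl⟩
      · exact ⟨0, rfl⟩
    · rintro ⟨i, rfl⟩
      fin_cases i
      · exact ⟨1, rfl⟩
      · exact ⟨0, rfl⟩
  exact hne _ hkey heq
end

section
/- Let G be a group of permutations of a set D and let E be a G-invariant equivalence relation on D. Consider the induced action of G on the quotient D/E, where α ∈ G maps the class of x to the class of α(x). Then for every n ≥ 1, the number of orbits of the induced action of G on n-element subsets of D/E is at most the number of orbits of G on n-element subsets of D. -/
/-- The set of orbits of the action of a group `G` of permutations of `D` on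
`n`-element subsets of `D`. -/
def subsetOrbitsOf {D : Type} (G : Subgroup (Equiv.Perm D)) (n : ℕ) :
    Set (Set (Set D)) :=
  {O | ∃ A : Set D, A.Finite ∧ A.ncard = n ∧ O = {B | ∃ g ∈ G, g '' A = B}}

/-- The set of orbits of the induced action of `G` on `n`-element subsets of the
quotient `D/E`, where the permutation induced by `g` maps the class of `x` to the class
of `g x`. -/
def quotSubsetOrbitsOf {D : Type} (G : Subgroup (Equiv.Perm D)) (s : Setoid D) (n : ℕ) :
    Set (Set (Set (Quotient s))) :=
  {O | ∃ A : Set (Quotient s), A.Finite ∧ A.ncard = n ∧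
    O = {B | ∃ g ∈ G,
      (fun x : D => (Quotient.mk s (g x))) '' {x : D | Quotient.mk s x ∈ A} = B}}

/-- If `E` is a `G`-invariant equivalence relation on `D`, then for every `n ≥ 1` the
number of orbits of the induced action of `G` on `n`-element subsets of `D/E` is at most
the number of orbits of `G` on `n`-element subsets of `D`. -/
theorem stmt13 {D : Type} (G : Subgroup (Equiv.Perm D)) (s : Setoid D)
    (hinv : ∀ g ∈ G, ∀ x y : D, s.r x y → s.r (g x) (g y))
    (n : ℕ) (hn : 1 ≤ n) :
    Cardinal.mk ↥(quotSubsetOrbitsOf G s n) ≤ Cardinal.mk ↥(subsetOrbitsOf G n) := by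
  have qmap_eq : ∀ g ∈ G, ∀ A : Set (Quotient s),
      (fun x : D => (Quotient.mk s (g x))) '' {x : D | Quotient.mk s x ∈ A}
        = Quotient.mk s '' (g '' (Quotient.out '' A)) := by
    intro g hg A
    ext b
    constructor
    · rintro ⟨x, hx, rfl⟩
      refine ⟨g (Quotient.out (Quotient.mk s x)), ⟨Quotient.out (Quotient.mk s x),
        ⟨Quotient.mk s x, hx, rfl⟩, rfl⟩, ?_⟩
      exact Quotient.sound (hinv g hg _ _ (Quotient.exact (Quotient.out_eq _)))
    · rintro ⟨_, ⟨_, ⟨a, ha, rfl⟩, rfl⟩, rfl⟩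
      exact ⟨Quotient.out a, by simpa using ha, rfl⟩
  have himg : ∀ (a b : Equiv.Perm D) (S : Set D), a '' (b '' S) = (a * b) '' S := by
    intro a b S
    rw [← Set.image_comp]
    rfl
  choose rep hrepfin hrepcard hrepO using
    fun O : quotSubsetOrbitsOf G s n => O.2
  set f : quotSubsetOrbitsOf G s n → subsetOrbitsOf G n := fun O =>
    ⟨{B | ∃ g ∈ G, g '' (Quotient.out '' rep O) = B},
     ⟨Quotient.out '' rep O, (hrepfin O).image _,
      by rw [Set.ncard_image_of_injective _ Quotient.out_injective]; exact hrepcard O,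
      rfl⟩⟩ with hf
  have hfi : Function.Injective f := by
    intro O₁ O₂ h
    have h' : {B | ∃ g ∈ G, g '' (Quotient.out '' rep O₁) = B}
        = {B | ∃ g ∈ G, g '' (Quotient.out '' rep O₂) = B} := congrArg Subtype.val h
    have hmem : Quotient.out '' rep O₂ ∈
        {B | ∃ g ∈ G, g '' (Quotient.out '' rep O₁) = B} := by
      rw [h']; exact ⟨1, one_mem G, by simp⟩
    obtain ⟨g, hg, hgA⟩ := hmem
    apply Subtype.ext
    rw [hrepO O₁, hrepO O₂]
    ext B
    simp only [Set.mem_setOf_eq]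
    constructor
    · rintro ⟨k, hk, rfl⟩
      refine ⟨k * g⁻¹, mul_mem hk (inv_mem hg), ?_⟩
      rw [qmap_eq _ hk, qmap_eq _ (mul_mem hk (inv_mem hg)), ← hgA, himg,
        inv_mul_cancel_right]
    · rintro ⟨k, hk, rfl⟩
      refine ⟨k * g, mul_mem hk hg, ?_⟩
      rw [qmap_eq _ hk, qmap_eq _ (mul_mem hk hg), ← hgA, himg]
  exact Cardinal.mk_le_of_injective hfi
end

section
/- Let Γ_1 be the relational structure with domain ℚ² and, for each pair ρ, σ ∈ {<, =, >}, a binary relation R_{ρ,σ} defined by R_{ρ,σ}((x_1,y_1),(x_2,y_2)) iff ρ(x_1,x_2) and σ(y_1,y_2). Then for every n ≥ 1, the automorphism group of Γ_1 has at least 2^{n−1} orbits in its action on n-element subsets of ℚ². -/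
/-- The comparison relation on `ℚ` named by `ρ ∈ {<, =, >}`. -/
def relOf : Ordering → ℚ → ℚ → Prop
  | .lt => (· < ·)
  | .eq => (· = ·)
  | .gt => (· > ·)

/-- `e` is an automorphism of the structure `Γ₁` with domain `ℚ²` and the nine binary
relations `R_{ρ,σ}((x₁,y₁),(x₂,y₂)) ⟺ ρ(x₁,x₂) ∧ σ(y₁,y₂)` for `ρ, σ ∈ {<, =, >}`. -/
def IsAutoGamma1 (e : ℚ × ℚ ≃ ℚ × ℚ) : Prop :=
  ∀ (ρ σ : Ordering) (p q : ℚ × ℚ),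
    (relOf ρ p.1 q.1 ∧ relOf σ p.2 q.2) ↔
      (relOf ρ (e p).1 (e q).1 ∧ relOf σ (e p).2 (e q).2)

lemma relOf_total (a b : ℚ) : ∃ σ, relOf σ a b := by
  rcases lt_trichotomy a b with h | h | h
  · exact ⟨.lt, h⟩
  · exact ⟨.eq, h⟩
  · exact ⟨.gt, h⟩

lemma auto_fst_lt {e : ℚ × ℚ ≃ ℚ × ℚ} (he : IsAutoGamma1 e) {p q : ℚ × ℚ}
    (h : p.1 < q.1) : (e p).1 < (e q).1 := by
  obtain ⟨σ, hσ⟩ := relOf_total p.2 q.2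
  exact ((he .lt σ p q).1 ⟨h, hσ⟩).1

lemma auto_snd_lt {e : ℚ × ℚ ≃ ℚ × ℚ} (he : IsAutoGamma1 e) {p q : ℚ × ℚ}
    (h : p.2 < q.2) : (e p).2 < (e q).2 := by
  obtain ⟨ρ, hρ⟩ := relOf_total p.1 q.1
  exact ((he ρ .lt p q).1 ⟨hρ, h⟩).2

lemma auto_symm {e : ℚ × ℚ ≃ ℚ × ℚ} (he : IsAutoGamma1 e) : IsAutoGamma1 e.symm := by
  intro ρ σ p q
  have := he ρ σ (e.symm p) (e.symm q)
  simpa using this.symm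

/-- The `k`-th `y`-coordinate determined by the bits of `i`. -/
def yseq (i k : ℕ) : ℚ := ∑ j ∈ Finset.range k, (if Nat.testBit i j then (1 : ℚ) else -1)

lemma yseq_succ (i k : ℕ) :
    yseq i (k + 1) = yseq i k + (if Nat.testBit i k then (1 : ℚ) else -1) :=
  Finset.sum_range_succ _ _

/-- For every `n ≥ 1`, the automorphism group of `Γ₁` has at least `2 ^ (n - 1)` orbits
in its action on `n`-element subsets of `ℚ²`: there are `2 ^ (n - 1)` many `n`-element
subsets that lie pairwise in distinct orbits. -/
theorem stmt16 (n : ℕ) (hn : 1 ≤ n) :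
    ∃ S : Fin (2 ^ (n - 1)) → Set (ℚ × ℚ),
      (∀ i, (S i).Finite ∧ (S i).ncard = n) ∧
      ∀ i j, (∃ e : ℚ × ℚ ≃ ℚ × ℚ, IsAutoGamma1 e ∧ e '' S i = S j) → i = j := by
  haveI : WellFoundedLT (Fin n) := inferInstance
  set g : ℕ → Fin n → ℚ × ℚ := fun i k => (((k : ℕ) : ℚ), yseq i k) with hg
  have hginj : ∀ i : ℕ, Function.Injective (g i) := by
    intro i a b hab
    have : ((a : ℕ) : ℚ) = ((b : ℕ) : ℚ) := congrArg Prod.fst hab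
    exact Fin.ext (by exact_mod_cast this)
  refine ⟨fun i => Set.range (g i.val), ?_, ?_⟩
  · intro i
    refine ⟨Set.finite_range _, ?_⟩
    show (Set.range (g i.val)).ncard = n
    rw [← Set.image_univ, Set.ncard_image_of_injective _ (hginj i.val), Set.ncard_univ,
      Nat.card_eq_fintype_card, Fintype.card_fin]
  · rintro i j ⟨e, he, him⟩
    have he' := auto_symm he
    replace him : ⇑e '' Set.range (g i.val) = Set.range (g j.val) := him
    have him' : e.symm '' Set.range (g j.val) = Set.range (g i.val) := by
      rw [← him, Equiv.symm_image_image]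
    -- choose the index functions
    have hmem : ∀ k : Fin n, ∃ l : Fin n, g j.val l = e (g i.val k) := by
      intro k
      have : e (g i.val k) ∈ Set.range (g j.val) := him ▸ Set.mem_image_of_mem e ⟨k, rfl⟩
      exact this
    have hmem' : ∀ k : Fin n, ∃ l : Fin n, g i.val l = e.symm (g j.val k) := by
      intro k
      have : e.symm (g j.val k) ∈ Set.range (g i.val) :=
        him' ▸ Set.mem_image_of_mem e.symm ⟨k, rfl⟩
      exact this
    choose f hf using hmem
    choose f' hf' using hmem'
    have hmono : StrictMono f := by
      intro a b hab
      have h1 : (g i.val a).1 < (g i.val b).1 := by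
        simp only [hg]
        exact_mod_cast hab
      have h2 := auto_fst_lt he h1
      rw [← hf a, ← hf b] at h2
      have : ((f a : ℕ) : ℚ) < ((f b : ℕ) : ℚ) := h2
      exact_mod_cast this
    have hmono' : StrictMono f' := by
      intro a b hab
      have h1 : (g j.val a).1 < (g j.val b).1 := by
        simp only [hg]
        exact_mod_cast hab
      have h2 := auto_fst_lt he' h1
      rw [← hf' a, ← hf' b] at h2
      have : ((f' a : ℕ) : ℚ) < ((f' b : ℕ) : ℚ) := h2
      exact_mod_cast this
    have hcomp : ∀ k, f' (f k) = k := by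
      intro k
      apply hginj i.val
      rw [hf' (f k), hf k, Equiv.symm_apply_apply]
    have hfid : ∀ k, f k = k := by
      intro k
      have h1 : k ≤ f k := hmono.le_apply
      have h2 : f k ≤ f' (f k) := hmono'.le_apply
      rw [hcomp k] at h2
      exact le_antisymm h2 h1
    -- now the bit patterns agree
    have hbit : ∀ m, m + 1 < n → i.val.testBit m = j.val.testBit m := by
      intro m hm
      have hm' : m < n := by omega
      set k : Fin n := ⟨m, hm'⟩
      set k' : Fin n := ⟨m + 1, hm⟩
      have hek : e (g i.val k) = g j.val k := by rw [← hf k, hfid k]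
      have hek' : e (g i.val k') = g j.val k' := by rw [← hf k', hfid k']
      by_cases hb : i.val.testBit m
      · have hlt : (g i.val k).2 < (g i.val k').2 := by
          simp only [hg, k, k']
          rw [yseq_succ, hb, if_pos rfl]
          linarith
        have := auto_snd_lt he hlt
        rw [hek, hek'] at this
        simp only [hg, k, k'] at this
        rw [yseq_succ] at this
        by_cases hb' : j.val.testBit m
        · rw [hb, hb']
        · rw [if_neg hb'] at this; linarith
      · have hlt : (g i.val k').2 < (g i.val k).2 := by
          simp only [hg, k, k']
          rw [yseq_succ, if_neg hb]
          linarith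
        have := auto_snd_lt he hlt
        rw [hek, hek'] at this
        simp only [hg, k, k'] at this
        rw [yseq_succ] at this
        by_cases hb' : j.val.testBit m
        · rw [if_pos hb'] at this; linarith
        · simp [hb, hb']
    apply Fin.ext
    apply Nat.eq_of_testBit_eq
    intro m
    rcases lt_or_ge m (n - 1) with hlt | hge
    · exact hbit m (by omega)
    · have h2 : (2 : ℕ) ^ (n - 1) ≤ 2 ^ m := Nat.pow_le_pow_right (by norm_num) hge
      rw [Nat.testBit_lt_two_pow (lt_of_lt_of_le i.isLt h2),
        Nat.testBit_lt_two_pow (lt_of_lt_of_le j.isLt h2)]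
end
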